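/- Suppose θ(x) = [[ζ(x), ζ(x)·0 + η(x)A_2],[A_2ᵀη(x)ᵀ, B(x)]] (i.e. c = 1, A_1 = 0) is positive semi-definite for all x in X = {x : x_1 ≥ Σ_{i=2}^q x_i²}. Then B(x) − A_2ᵀ η(x)ᵀ η(x) A_2 is positive semi-definite for all x ∈ X. -/

import Mathlib

open Matrix

/-- `T_{ij}(y) ∈ ℝⁿ` with `i`-th entry `yⱼ`, `j`-th entry `-yᵢ`, zero elsewhere. -/
noncomputable def Tvec (n : ℕ) (i j : Fin n) (y : Fin n → ℝ) : Fin n → ℝ :=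
  fun k => if k = i then y j else if k = j then -(y i) else 0

/-- `η(y)` : first row zero, columns `T_{ij}(y)` for `i < j`. -/
noncomputable def etaMat (n : ℕ) (y : Fin n → ℝ) :
    Matrix (Unit ⊕ Fin n) {ij : Fin n × Fin n // ij.1 < ij.2} ℝ :=
  Matrix.of fun r c => Sum.elim (fun _ => 0) (fun k => Tvec n c.1.1 c.1.2 y k) r

/-- The parabolic boundary matrix `ζ(x) = [[4x₁, 2yᵀ],[2y, Id]]`. -/
noncomputable def zetaMat (n : ℕ) (x1 : ℝ) (y : Fin n → ℝ) :
    Matrix (Unit ⊕ Fin n) (Unit ⊕ Fin n) ℝ :=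
  Matrix.of fun r c =>
    match r, c with
    | Sum.inl _, Sum.inl _ => 4 * x1
    | Sum.inl _, Sum.inr j => 2 * y j
    | Sum.inr j, Sum.inl _ => 2 * y j
    | Sum.inr j, Sum.inr k => if j = k then 1 else 0

lemma zeta_mul_eta (n : ℕ) (x1 : ℝ) (y : Fin n → ℝ) :
    zetaMat n x1 y * etaMat n y = etaMat n y := by
  ext r c
  obtain ⟨⟨i, j⟩, hij⟩ := c
  have hne : i ≠ j := ne_of_lt hij
  cases r with
  | inl u =>
    simp only [Matrix.mul_apply, Fintype.sum_sum_type, Finset.univ_unique,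
      Finset.sum_singleton, zetaMat, etaMat, Matrix.of_apply, Sum.elim_inl, Sum.elim_inr,
      Tvec, mul_zero, mul_ite, mul_neg, zero_add]
    have step : ∀ k : Fin n,
        (if k = i then 2 * y k * y j else if k = j then -(2 * y k * y i) else 0)
        = (if k = i then 2 * y k * y j else 0) + (if k = j then -(2 * y k * y i) else 0) := by
      intro k
      by_cases h1 : k = i
      · subst h1; simp [hne]
      · by_cases h2 : k = j
        · subst h2; simp [h1]
        · simp [h1, h2]
    rw [Finset.sum_congr rfl (fun k _ => step k)]
    simp [Finset.sum_add_distrib]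
    ring
  | inr k =>
    simp only [Matrix.mul_apply, Fintype.sum_sum_type, Finset.univ_unique,
      Finset.sum_singleton, zetaMat, etaMat, Matrix.of_apply, Sum.elim_inl, Sum.elim_inr,
      mul_zero, ite_mul, one_mul, zero_mul, zero_add]
    simp [Finset.sum_ite_eq]

/-- If `θ(x) = [[ζ(x), η(x)A₂],[A₂ᵀη(x)ᵀ, B(x)]]` is positive semi-definite for all `x`
in `X = {x : x₁ ≥ ∑ yᵢ²}`, then `B(x) - A₂ᵀη(x)ᵀη(x)A₂` is positive semi-definite for
all `x ∈ X`. Coordinates: `x = (x₁, y, z)` indexed by `(Unit ⊕ Fin n) ⊕ Fin m`. -/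
theorem stmt12 (n m : ℕ)
    (A2 : Matrix {ij : Fin n × Fin n // ij.1 < ij.2} (Fin m) ℝ)
    (B : (((Unit ⊕ Fin n) ⊕ Fin m) → ℝ) → Matrix (Fin m) (Fin m) ℝ)
    (hpsd : ∀ x : ((Unit ⊕ Fin n) ⊕ Fin m) → ℝ,
      ∑ j, (x (Sum.inl (Sum.inr j))) ^ 2 ≤ x (Sum.inl (Sum.inl ())) →
      (Matrix.fromBlocks
        (zetaMat n (x (Sum.inl (Sum.inl ()))) (fun j => x (Sum.inl (Sum.inr j))))
        (etaMat n (fun j => x (Sum.inl (Sum.inr j))) * A2)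
        (etaMat n (fun j => x (Sum.inl (Sum.inr j))) * A2)ᵀ
        (B x)).PosSemidef) :
    ∀ x : ((Unit ⊕ Fin n) ⊕ Fin m) → ℝ,
      ∑ j, (x (Sum.inl (Sum.inr j))) ^ 2 ≤ x (Sum.inl (Sum.inl ())) →
      (B x - A2ᵀ * (etaMat n (fun j => x (Sum.inl (Sum.inr j))))ᵀ *
        etaMat n (fun j => x (Sum.inl (Sum.inr j))) * A2).PosSemidef := by
  intro x hx
  set y : Fin n → ℝ := fun j => x (Sum.inl (Sum.inr j)) with hy
  set η := etaMat n y with hη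
  set ζ := zetaMat n (x (Sum.inl (Sum.inl ()))) y with hζ
  have hθ := hpsd x hx
  have hCeq : A2ᵀ * ηᵀ * η * A2 = (η * A2)ᴴ * (η * A2) := by
    rw [Matrix.conjTranspose_eq_transpose_of_trivial, Matrix.transpose_mul]
    simp [Matrix.mul_assoc]
  have hB : (B x).IsHermitian := by
    have h := hθ.1
    ext i j
    have := congrFun (congrFun h (Sum.inr i)) (Sum.inr j)
    simpa [Matrix.conjTranspose_apply, Matrix.fromBlocks] using this
  refine Matrix.PosSemidef.of_dotProduct_mulVec_nonneg ?_ ?_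
  · exact hB.sub (hCeq ▸ Matrix.isHermitian_conjTranspose_mul_self (η * A2))
  · intro w
    have key : ζ * η = η := zeta_mul_eta n _ y
    set v : (Unit ⊕ Fin n) → ℝ := -((η * A2).mulVec w) with hv
    have h := hθ.dotProduct_mulVec_nonneg (Sum.elim v w)
    have h1 : ζ.mulVec v = v := by
      simp only [hv, Matrix.mulVec_neg, Matrix.mulVec_mulVec, ← Matrix.mul_assoc, key]
    rw [show (star (Sum.elim v w)) = Sum.elim v w by simp,
      Matrix.fromBlocks_mulVec] at h
    simp only [Sum.elim_comp_inl, Sum.elim_comp_inr, sumElim_dotProduct_sumElim,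
      ← hη, ← hζ, ← hy] at h
    rw [h1] at h
    have h2 : v + (η * A2).mulVec w = 0 := by rw [hv]; exact neg_add_cancel _
    rw [h2, dotProduct_zero, zero_add] at h
    have h3 : (η * A2)ᵀ.mulVec v = -((A2ᵀ * ηᵀ * η * A2).mulVec w) := by
      rw [hv, Matrix.mulVec_neg, Matrix.mulVec_mulVec, Matrix.transpose_mul,
        Matrix.mul_assoc, Matrix.mul_assoc, Matrix.mul_assoc]
    rw [h3] at h
    simp only [dotProduct_add, dotProduct_neg] at h
    simp only [star_trivial, Matrix.sub_mulVec, dotProduct_sub]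
    linarith
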